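/- The metric space (usc-fcns(S), dl) of usc functions from a rectangle S ⊆ ℝ^m into [0,1], equipped with the hypo-distance, is separable: the countable family of rational-valued order-0 epi-splines over a countable infinite refinement of box partitions is dense. -/

import Mathlib

open Metric Set Filter Pointwise

/-- The hypograph of `f` restricted to `S`, as a subset of `(Fin m → ℝ) × ℝ`
(carrying the max-norm, since both the `Pi` and `Prod` norms are sup-norms). -/
def hypo {m : ℕ} (S : Set (Fin m → ℝ)) (f : (Fin m → ℝ) → ℝ) :
    Set ((Fin m → ℝ) × ℝ) :=
  {p | p.1 ∈ S ∧ p.2 ≤ f p.1}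

/-- The truncated ρ-hypo-distance
`dl_ρ(f,g) = sup { |dist(x̄, hypo f) − dist(x̄, hypo g)| : ‖x̄‖ ≤ ρ }`. -/
noncomputable def dlrho {m : ℕ} (S : Set (Fin m → ℝ)) (f g : (Fin m → ℝ) → ℝ)
    (ρ : ℝ) : ℝ :=
  sSup ((fun p => |Metric.infDist p (hypo S f) - Metric.infDist p (hypo S g)|) ''
    {p : (Fin m → ℝ) × ℝ | ‖p‖ ≤ ρ})

/-- The hypo-distance `dl(f,g) = ∫₀^∞ dl_ρ(f,g) e^{−ρ} dρ`. -/
noncomputable def dl {m : ℕ} (S : Set (Fin m → ℝ)) (f g : (Fin m → ℝ) → ℝ) : ℝ :=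
  ∫ ρ in Set.Ioi (0 : ℝ), dlrho S f g ρ * Real.exp (-ρ)

/-- The Attouch–Wets hat-distance
`d̂l_ρ(f,g) = inf{η ≥ 0 : hypo f ∩ ρ𝕊 ⊆ hypo g + η𝕊 and hypo g ∩ ρ𝕊 ⊆ hypo f + η𝕊}`. -/
noncomputable def hatdl {m : ℕ} (S : Set (Fin m → ℝ)) (f g : (Fin m → ℝ) → ℝ)
    (ρ : ℝ) : ℝ :=
  sInf {η : ℝ | 0 ≤ η ∧
    hypo S f ∩ Metric.closedBall (0 : (Fin m → ℝ) × ℝ) ρ ⊆ hypo S g + Metric.closedBall (0 : (Fin m → ℝ) × ℝ) η ∧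
    hypo S g ∩ Metric.closedBall (0 : (Fin m → ℝ) × ℝ) ρ ⊆ hypo S f + Metric.closedBall (0 : (Fin m → ℝ) × ℝ) η}

/-- The open box `(l₁,u₁) × ⋯ × (l_m,u_m)`. -/
def openBox {m : ℕ} (l u : Fin m → ℝ) : Set (Fin m → ℝ) :=
  {x | ∀ i, l i < x i ∧ x i < u i}

/-- The closed box `[l₁,u₁] × ⋯ × [l_m,u_m]`. -/
def closedBox {m : ℕ} (l u : Fin m → ℝ) : Set (Fin m → ℝ) :=
  {x | ∀ i, l i ≤ x i ∧ x i ≤ u i}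

lemma closedBox_eq_Icc {m : ℕ} (l u : Fin m → ℝ) : closedBox l u = Set.Icc l u := by
  ext x; simp [closedBox, Pi.le_def, forall_and]

lemma isClosed_closedBox {m : ℕ} (l u : Fin m → ℝ) : IsClosed (closedBox l u) := by
  rw [closedBox_eq_Icc]; exact isClosed_Icc

lemma usc_max {X : Type*} [TopologicalSpace X] {f g : X → ℝ}
    (hf : UpperSemicontinuous f) (hg : UpperSemicontinuous g) :
    UpperSemicontinuous (fun x => f x ⊔ g x) := by
  intro x y hy
  simp only [sup_lt_iff] at hy ⊢
  filter_upwards [hf x y hy.1, hg x y hy.2] with z h1 h2 using ⟨h1, h2⟩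

lemma usc_sup' {ι X : Type*} [TopologicalSpace X] {s : Finset ι} (hs : s.Nonempty)
    {h : ι → X → ℝ} (hh : ∀ k, UpperSemicontinuous (h k)) :
    UpperSemicontinuous fun x => s.sup' hs fun k => h k x := by
  induction hs using Finset.Nonempty.cons_induction with
  | singleton k => simpa using hh k
  | cons k s hk hne ih =>
    simp only [Finset.sup'_cons hne]
    exact usc_max (hh k) ih

noncomputable def gridL {m : ℕ} (α β : Fin m → ℝ) (n : ℕ) (k : Fin m → Fin (n+1)) :
    Fin m → ℝ := fun i => α i + (k i : ℝ) * ((β i - α i) / (n+1))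

noncomputable def gridU {m : ℕ} (α β : Fin m → ℝ) (n : ℕ) (k : Fin m → Fin (n+1)) :
    Fin m → ℝ := fun i => α i + ((k i : ℝ) + 1) * ((β i - α i) / (n+1))

open Classical in
noncomputable def espline {m : ℕ} (α β : Fin m → ℝ) (n : ℕ)
    (q : (Fin m → Fin (n+1)) → ℚ≥0) : (Fin m → ℝ) → ℝ :=
  fun x => Finset.univ.sup' Finset.univ_nonempty
    fun k => if x ∈ closedBox (gridL α β n k) (gridU α β n k)
      then ((min (q k) 1 : ℚ≥0) : ℝ) else 0

lemma cell_nonoverlap {a0 h x : ℝ} {a b : ℕ} (hab : a ≠ b)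
    (hx1 : a0 + a * h < x) (hx2 : x < a0 + (a+1) * h)
    (hy1 : a0 + b * h ≤ x) (hy2 : x ≤ a0 + (b+1) * h) : False := by
  have hh : 0 < h := by nlinarith
  rcases lt_or_gt_of_ne hab with hlt | hlt
  · have : (a:ℝ) + 1 ≤ b := by exact_mod_cast Nat.succ_le_of_lt hlt
    nlinarith
  · have : (b:ℝ) + 1 ≤ a := by exact_mod_cast Nat.succ_le_of_lt hlt
    nlinarith

lemma espline_nonneg {m : ℕ} (α β : Fin m → ℝ) (n : ℕ) (q : (Fin m → Fin (n+1)) → ℚ≥0)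
    (x : Fin m → ℝ) : 0 ≤ espline α β n q x := by
  classical
  obtain ⟨k⟩ : Nonempty (Fin m → Fin (n+1)) := inferInstance
  refine le_trans ?_ (Finset.le_sup' _ (Finset.mem_univ k))
  split_ifs <;> positivity

lemma espline_le_one {m : ℕ} (α β : Fin m → ℝ) (n : ℕ) (q : (Fin m → Fin (n+1)) → ℚ≥0)
    (x : Fin m → ℝ) : espline α β n q x ≤ 1 := by
  apply Finset.sup'_le
  intro k _
  split_ifs
  · calc ((min (q k) 1 : ℚ≥0) : ℝ) ≤ ((1 : ℚ≥0) : ℝ) := by exact_mod_cast min_le_right _ _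
      _ = 1 := by norm_num
  · norm_num

open Classical in
lemma espline_rat {m : ℕ} (α β : Fin m → ℝ) (n : ℕ) (q : (Fin m → Fin (n+1)) → ℚ≥0)
    (x : Fin m → ℝ) : ∃ r : ℚ, espline α β n q x = (r : ℝ) := by
  obtain ⟨k, -, hk⟩ := Finset.exists_mem_eq_sup' (Finset.univ_nonempty) 
    (fun k => if x ∈ closedBox (gridL α β n k) (gridU α β n k)
      then ((min (q k) 1 : ℚ≥0) : ℝ) else 0)
  rw [espline, hk]
  split_ifs
  · exact ⟨((min (q k) 1 : ℚ≥0) : ℚ), by push_cast; ring⟩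
  · exact ⟨0, by norm_num⟩

open Classical in
lemma espline_usc {m : ℕ} (α β : Fin m → ℝ) (n : ℕ) (q : (Fin m → Fin (n+1)) → ℚ≥0) :
    UpperSemicontinuous (espline α β n q) := by
  apply usc_sup'
  intro k
  have : (fun x => if x ∈ closedBox (gridL α β n k) (gridU α β n k)
      then ((min (q k) 1 : ℚ≥0) : ℝ) else 0)
      = Set.indicator (closedBox (gridL α β n k) (gridU α β n k))
        (fun _ => ((min (q k) 1 : ℚ≥0) : ℝ)) := by
    funext x; rw [Set.indicator_apply]
  rw [this]
  exact (isClosed_closedBox _ _).upperSemicontinuous_indicator (by positivity)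

lemma grid_subset {m : ℕ} (α β : Fin m → ℝ) (hαβ : ∀ i, α i ≤ β i) (n : ℕ)
    (k : Fin m → Fin (n+1)) :
    closedBox (gridL α β n k) (gridU α β n k) ⊆ closedBox α β := by
  intro x hx i
  have h1 := (hx i).1
  have h2 := (hx i).2
  have hk : (k i : ℝ) + 1 ≤ (n:ℝ) + 1 := by
    have := (k i).isLt
    have : (k i : ℝ) ≤ n := by exact_mod_cast Nat.lt_succ_iff.mp this
    linarith
  have hd : 0 ≤ (β i - α i) / (n+1) := by
    apply div_nonneg (by linarith [hαβ i]) (by positivity)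
  have hL : α i ≤ gridL α β n k i := by
    simp only [gridL]; nlinarith [hd, show (0:ℝ) ≤ (k i : ℝ) from by positivity]
  have hU : gridU α β n k i ≤ β i := by
    simp only [gridU]
    have h3 : ((k i : ℝ) + 1) * ((β i - α i) / (n+1)) ≤ ((n:ℝ)+1) * ((β i - α i)/(n+1)) :=
      mul_le_mul_of_nonneg_right hk hd
    have h4 : ((n:ℝ)+1) * ((β i - α i)/(n+1)) = β i - α i := by
      field_simp
    linarith
  exact ⟨le_trans hL h1, le_trans h2 hU⟩

lemma cover1d {a b x : ℝ} (hab : a ≤ b) (h1 : a ≤ x) (h2 : x ≤ b) (n : ℕ) :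
    ∃ c : Fin (n+1), a + (c:ℝ) * ((b - a)/(n+1)) ≤ x ∧ x ≤ a + ((c:ℝ)+1) * ((b-a)/(n+1)) := by
  rcases eq_or_lt_of_le hab with heq | hlt
  · have hba : b - a = 0 := by rw [heq]; ring
    refine ⟨0, ?_, ?_⟩ <;> rw [hba] <;> simp <;> linarith [heq.le, heq.ge]
  · have hh0 : 0 < (b - a)/(n+1) := div_pos (by linarith) (by positivity)
    set h := (b-a)/(n+1) with hhdef
    set r := (x - a)/h with hr
    have hr0 : 0 ≤ r := div_nonneg (by linarith) hh0.le
    have hrh : r * h = x - a := by rw [hr]; field_simp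
    refine ⟨⟨min ⌊r⌋₊ n, by omega⟩, ?_, ?_⟩
    · show a + ((min ⌊r⌋₊ n : ℕ) : ℝ) * h ≤ x
      have hle : ((min ⌊r⌋₊ n : ℕ) : ℝ) ≤ r := by
        calc ((min ⌊r⌋₊ n : ℕ) : ℝ) ≤ (⌊r⌋₊ : ℝ) := by exact_mod_cast min_le_left _ _
          _ ≤ r := Nat.floor_le hr0
      nlinarith
    · show x ≤ a + (((min ⌊r⌋₊ n : ℕ) : ℝ) + 1) * h
      rcases le_or_gt (⌊r⌋₊) n with hc | hc
      · rw [min_eq_left hc]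
        have : r < (⌊r⌋₊ : ℝ) + 1 := Nat.lt_floor_add_one r
        nlinarith
      · rw [min_eq_right hc.le]
        have hnb : ((n:ℝ) + 1) * h = b - a := by rw [hhdef]; field_simp
        nlinarith

lemma grid_cover {m : ℕ} (α β : Fin m → ℝ) (hαβ : ∀ i, α i ≤ β i) (n : ℕ)
    {x : Fin m → ℝ} (hx : x ∈ closedBox α β) :
    ∃ k : Fin m → Fin (n+1), x ∈ closedBox (gridL α β n k) (gridU α β n k) := by
  refine ⟨fun i => (cover1d (hαβ i) (hx i).1 (hx i).2 n).choose, fun i => ?_⟩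
  exact (cover1d (hαβ i) (hx i).1 (hx i).2 n).choose_spec

lemma openBox_disj {m : ℕ} (α β : Fin m → ℝ) (n : ℕ) {k k' : Fin m → Fin (n+1)}
    (hkk : k ≠ k') :
    Disjoint (openBox (gridL α β n k) (gridU α β n k))
      (openBox (gridL α β n k') (gridU α β n k')) := by
  rw [Set.disjoint_left]
  intro x hx hx'
  obtain ⟨i, hi⟩ := Function.ne_iff.mp hkk
  have h1 := (hx i).1; have h2 := (hx i).2
  have h3 := (hx' i).1; have h4 := (hx' i).2
  simp only [gridL, gridU] at h1 h2 h3 h4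
  exact cell_nonoverlap (a := (k i : ℕ)) (b := (k' i : ℕ))
    (fun h => hi (Fin.val_injective h)) h1 h2 h3.le h4.le

lemma open_closed_nonoverlap {m : ℕ} (α β : Fin m → ℝ) (n : ℕ) {k k' : Fin m → Fin (n+1)}
    (hkk : k ≠ k') {x : Fin m → ℝ} (hx : x ∈ openBox (gridL α β n k) (gridU α β n k)) :
    x ∉ closedBox (gridL α β n k') (gridU α β n k') := by
  intro hx'
  obtain ⟨i, hi⟩ := Function.ne_iff.mp hkk
  have h1 := (hx i).1; have h2 := (hx i).2
  have h3 := (hx' i).1; have h4 := (hx' i).2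
  simp only [gridL, gridU] at h1 h2 h3 h4
  exact cell_nonoverlap (a := (k i : ℕ)) (b := (k' i : ℕ))
    (fun h => hi (Fin.val_injective h)) h1 h2 h3 h4

open Classical in
lemma espline_ge {m : ℕ} (α β : Fin m → ℝ) (n : ℕ) (q : (Fin m → Fin (n+1)) → ℚ≥0)
    {x : Fin m → ℝ} {k : Fin m → Fin (n+1)}
    (hx : x ∈ closedBox (gridL α β n k) (gridU α β n k)) :
    ((min (q k) 1 : ℚ≥0) : ℝ) ≤ espline α β n q x := by
  refine le_trans ?_ (Finset.le_sup' _ (Finset.mem_univ k))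
  rw [if_pos hx]

open Classical in
lemma espline_const {m : ℕ} (α β : Fin m → ℝ) (n : ℕ) (q : (Fin m → Fin (n+1)) → ℚ≥0)
    {x : Fin m → ℝ} {k : Fin m → Fin (n+1)}
    (hx : x ∈ openBox (gridL α β n k) (gridU α β n k)) :
    espline α β n q x = ((min (q k) 1 : ℚ≥0) : ℝ) := by
  have hxc : x ∈ closedBox (gridL α β n k) (gridU α β n k) :=
    fun i => ⟨(hx i).1.le, (hx i).2.le⟩
  refine le_antisymm ?_ (espline_ge α β n q hxc)
  apply Finset.sup'_le
  intro k' _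
  rcases eq_or_ne k k' with rfl | hne
  · rw [if_pos hxc]
  · rw [if_neg (open_closed_nonoverlap α β n hne hx)]
    positivity

lemma infDist_le_add_of_subset {E : Type*} [NormedAddCommGroup E] {A B : Set E} {δ : ℝ}
    (hδ : 0 ≤ δ) (h : A ⊆ B + Metric.closedBall 0 δ) (hA : A.Nonempty) (p : E) :
    Metric.infDist p B ≤ Metric.infDist p A + δ := by
  refine le_of_forall_pos_le_add fun ε' hε' => ?_
  obtain ⟨a, ha, hda⟩ := (Metric.infDist_lt_iff hA).mp (lt_add_of_pos_right _ hε')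
  obtain ⟨b, hb, v, hv, hba⟩ := h ha
  have hdist : dist p b ≤ dist p a + δ := by
    have h1 : dist p b ≤ dist p a + dist a b := dist_triangle p a b
    have h2 : dist a b = ‖v‖ := by
      rw [← hba, dist_eq_norm]; simp
    rw [mem_closedBall_zero_iff] at hv
    linarith
  have h3 : Metric.infDist p B ≤ dist p b := Metric.infDist_le_dist_of_mem hb
  linarith

lemma dl_le {m : ℕ} (S : Set (Fin m → ℝ)) (f g : (Fin m → ℝ) → ℝ) {δ : ℝ} (hδ : 0 ≤ δ)
    (h : ∀ p : (Fin m → ℝ) × ℝ,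
      |Metric.infDist p (hypo S f) - Metric.infDist p (hypo S g)| ≤ δ) :
    dl S f g ≤ δ := by
  have hrho : ∀ ρ : ℝ, dlrho S f g ρ ≤ δ := fun ρ =>
    Real.sSup_le (by rintro _ ⟨p, -, rfl⟩; exact h p) hδ
  have hrho0 : ∀ ρ ∈ Ioi (0:ℝ), 0 ≤ dlrho S f g ρ := by
    intro ρ hρ
    have h0 : (0 : (Fin m → ℝ) × ℝ) ∈ {p : (Fin m → ℝ) × ℝ | ‖p‖ ≤ ρ} := by
      simp only [Set.mem_setOf_eq, norm_zero]; exact (mem_Ioi.mp hρ).le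
    have bdd : BddAbove ((fun p => |Metric.infDist p (hypo S f) -
        Metric.infDist p (hypo S g)|) '' {p : (Fin m → ℝ) × ℝ | ‖p‖ ≤ ρ}) :=
      ⟨δ, by rintro _ ⟨p, -, rfl⟩; exact h p⟩
    exact le_trans (abs_nonneg _) (le_csSup bdd (Set.mem_image_of_mem _ h0))
  have hint : MeasureTheory.IntegrableOn (fun ρ => δ * Real.exp (-ρ)) (Ioi (0:ℝ)) := by
    have := (exp_neg_integrableOn_Ioi 0 (one_pos)).const_mul δ
    simpa [MeasureTheory.IntegrableOn] using this
  rw [dl]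
  calc ∫ ρ in Set.Ioi (0:ℝ), dlrho S f g ρ * Real.exp (-ρ)
      ≤ ∫ ρ in Set.Ioi (0:ℝ), δ * Real.exp (-ρ) := by
        apply MeasureTheory.integral_mono_of_nonneg
        · exact (MeasureTheory.ae_restrict_iff' measurableSet_Ioi).mpr
            (MeasureTheory.ae_of_all _ fun ρ hρ =>
              mul_nonneg (hrho0 ρ hρ) (Real.exp_pos _).le)
        · exact hint
        · exact (MeasureTheory.ae_restrict_iff' measurableSet_Ioi).mpr
            (MeasureTheory.ae_of_all _ fun ρ _ =>
              mul_le_mul_of_nonneg_right (hrho ρ) (Real.exp_pos _).le)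
    _ = δ * ∫ ρ in Set.Ioi (0:ℝ), Real.exp (-ρ) := MeasureTheory.integral_const_mul δ _
    _ = δ := by rw [integral_exp_neg_Ioi_zero, mul_one]

instance : Countable ℚ≥0 :=
  Function.Injective.countable (f := fun q : ℚ≥0 => (q : ℚ))
    (fun a b h => NNRat.coe_injective (by simpa using h))

open Classical in
lemma espline_cases {m : ℕ} (α β : Fin m → ℝ) (n : ℕ) (q : (Fin m → Fin (n+1)) → ℚ≥0)
    (x : Fin m → ℝ) :
    espline α β n q x ≤ 0 ∨ ∃ k, x ∈ closedBox (gridL α β n k) (gridU α β n k) ∧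
      espline α β n q x ≤ ((min (q k) 1 : ℚ≥0) : ℝ) := by
  obtain ⟨k0, -, hk0⟩ := Finset.exists_mem_eq_sup' (Finset.univ_nonempty)
    (fun k => if x ∈ closedBox (gridL α β n k) (gridU α β n k)
      then ((min (q k) 1 : ℚ≥0) : ℝ) else 0)
  have h : espline α β n q x = if x ∈ closedBox (gridL α β n k0) (gridU α β n k0)
      then ((min (q k0) 1 : ℚ≥0) : ℝ) else 0 := hk0
  rw [h]
  split_ifs with hmem
  · exact Or.inr ⟨k0, hmem, le_rfl⟩
  · exact Or.inl le_rfl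

/-- The metric space (usc-fcns(S), dl) of usc functions from a rectangle
S = [α,β] ⊆ ℝ^m into [0,1] with the hypo-distance is separable: there is a countable
dense family of rational-valued order-0 epi-splines (rational constants on the open boxes
of box partitions whose closures cover S). -/
theorem stmt16 {m : ℕ} (α β : Fin m → ℝ) (hαβ : ∀ i, α i ≤ β i) :
    ∃ D : Set ((Fin m → ℝ) → ℝ), D.Countable ∧
      (∀ g ∈ D, UpperSemicontinuousOn g (closedBox α β) ∧
        (∀ x ∈ closedBox α β, g x ∈ Set.Icc (0 : ℝ) 1) ∧
        (∀ x ∈ closedBox α β, ∃ q : ℚ, g x = (q : ℝ)) ∧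
        ∃ (N : ℕ) (l u : Fin N → Fin m → ℝ),
          (∀ k, closedBox (l k) (u k) ⊆ closedBox α β) ∧
          (closedBox α β ⊆ ⋃ k, closedBox (l k) (u k)) ∧
          (∀ k k', k ≠ k' → Disjoint (openBox (l k) (u k)) (openBox (l k') (u k'))) ∧
          (∀ k, ∃ q : ℚ, ∀ x ∈ openBox (l k) (u k), g x = (q : ℝ))) ∧
      (∀ f : (Fin m → ℝ) → ℝ, UpperSemicontinuousOn f (closedBox α β) →
        (∀ x ∈ closedBox α β, f x ∈ Set.Icc (0 : ℝ) 1) →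
        ∀ ε > (0 : ℝ), ∃ g ∈ D, dl (closedBox α β) f g < ε) := by
  classical
  refine ⟨Set.range (fun p : (Σ n : ℕ, ((Fin m → Fin (n+1)) → ℚ≥0)) => espline α β p.1 p.2),
    Set.countable_range _, ?_, ?_⟩
  · rintro g ⟨⟨n, q⟩, rfl⟩
    refine ⟨(espline_usc α β n q).upperSemicontinuousOn _,
      fun x _ => ⟨espline_nonneg α β n q x, espline_le_one α β n q x⟩,
      fun x _ => espline_rat α β n q x,
      (n+1)^m, fun j => gridL α β n (finFunctionFinEquiv.symm j),
      fun j => gridU α β n (finFunctionFinEquiv.symm j), ?_, ?_, ?_, ?_⟩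
    · exact fun j => grid_subset α β hαβ n _
    · intro x hx
      obtain ⟨k, hk⟩ := grid_cover α β hαβ n hx
      exact Set.mem_iUnion.mpr ⟨finFunctionFinEquiv k, by simpa using hk⟩
    · intro j j' hne
      exact openBox_disj α β n (fun h => hne (by simpa using congrArg finFunctionFinEquiv h))
    · intro j
      refine ⟨((min (q (finFunctionFinEquiv.symm j)) 1 : ℚ≥0) : ℚ), fun x hx => ?_⟩
      show espline α β n q x = _
      rw [espline_const α β n q hx]
      norm_cast
  · intro f hf hfb ε hε
    set S := closedBox α β with hS
    have hαS : α ∈ S := fun i => ⟨le_rfl, hαβ i⟩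
    have hε2 : (0:ℝ) ≤ ε/2 := by linarith
    set n := Finset.univ.sup (fun i : Fin m => ⌈(β i - α i)/(ε/2)⌉₊) with hn
    have hmesh : ∀ i, (β i - α i)/((n:ℝ)+1) ≤ ε/2 := by
      intro i
      have h1 : (β i - α i)/(ε/2) ≤ (⌈(β i - α i)/(ε/2)⌉₊ : ℝ) := Nat.le_ceil _
      have h2 : ((⌈(β i - α i)/(ε/2)⌉₊ : ℕ) : ℝ) ≤ (n:ℝ) := by
        have := Finset.le_sup (f := fun i : Fin m => ⌈(β i - α i)/(ε/2)⌉₊) (Finset.mem_univ i)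
        rw [hn]
        exact_mod_cast this
      have h3 : (β i - α i) ≤ (n:ℝ) * (ε/2) :=
        (div_le_iff₀ (by linarith : (0:ℝ) < ε/2)).mp (h1.trans h2)
      rw [div_le_iff₀ (by positivity : (0:ℝ) < (n:ℝ)+1)]
      nlinarith
    have hBsub : ∀ k : Fin m → Fin (n+1), closedBox (gridL α β n k) (gridU α β n k) ⊆ S :=
      fun k => grid_subset α β hαβ n k
    have hBne : ∀ k : Fin m → Fin (n+1), (closedBox (gridL α β n k) (gridU α β n k)).Nonempty := by
      intro k
      refine ⟨gridL α β n k, fun i => ⟨le_rfl, ?_⟩⟩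
      simp only [gridL, gridU]
      have hd : 0 ≤ (β i - α i)/((n:ℝ)+1) := div_nonneg (by linarith [hαβ i]) (by positivity)
      nlinarith
    set M : (Fin m → Fin (n+1)) → ℝ :=
      fun k => sSup (f '' closedBox (gridL α β n k) (gridU α β n k)) with hM
    have himg_ne : ∀ k, (f '' closedBox (gridL α β n k) (gridU α β n k)).Nonempty :=
      fun k => (hBne k).image f
    have himg_bdd : ∀ k, BddAbove (f '' closedBox (gridL α β n k) (gridU α β n k)) :=
      fun k => ⟨1, by rintro _ ⟨y, hy, rfl⟩; exact (hfb y (hBsub k hy)).2⟩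
    have hM_le1 : ∀ k, M k ≤ 1 :=
      fun k => Real.sSup_le (by rintro _ ⟨y, hy, rfl⟩; exact (hfb y (hBsub k hy)).2) zero_le_one
    have hfM : ∀ k, ∀ y ∈ closedBox (gridL α β n k) (gridU α β n k), f y ≤ M k :=
      fun k y hy => le_csSup (himg_bdd k) (Set.mem_image_of_mem f hy)
    have hM0 : ∀ k, 0 ≤ M k := by
      intro k
      obtain ⟨y, hy⟩ := hBne k
      exact le_trans (hfb y (hBsub k hy)).1 (hfM k y hy)
    have hq : ∀ k, ∃ r : ℚ, M k < (r:ℝ) ∧ (r:ℝ) < M k + ε/4 :=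
      fun k => exists_rat_btwn (by linarith)
    choose qr hq1 hq2 using hq
    have hqr0 : ∀ k, 0 ≤ qr k := by
      intro k
      have : (0:ℝ) ≤ (qr k : ℝ) := le_of_lt (lt_of_le_of_lt (hM0 k) (hq1 k))
      exact_mod_cast this
    set qnn : (Fin m → Fin (n+1)) → ℚ≥0 := fun k => ⟨qr k, hqr0 k⟩ with hqnn
    set g := espline α β n qnn with hg
    have hvcast : ∀ k, ((min (qnn k) 1 : ℚ≥0) : ℝ) = min ((qr k : ℝ)) 1 := by
      intro k
      have h2 : ((min (qnn k) 1 : ℚ≥0) : ℝ) = min ((qnn k : ℝ)) 1 := by push_cast; norm_cast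
      have h1 : ((qnn k : ℝ)) = (qr k : ℝ) := by rw [hqnn]; norm_cast
      rw [h2, h1]
    have hv_ge : ∀ k, M k ≤ ((min (qnn k) 1 : ℚ≥0) : ℝ) := by
      intro k; rw [hvcast k]
      exact le_min (hq1 k).le (hM_le1 k)
    have hv_le : ∀ k, ((min (qnn k) 1 : ℚ≥0) : ℝ) ≤ M k + ε/4 := by
      intro k; rw [hvcast k]
      exact le_trans (min_le_left _ _) (hq2 k).le
    have hfg : ∀ x ∈ S, f x ≤ g x := by
      intro x hx
      obtain ⟨k, hk⟩ := grid_cover α β hαβ n hx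
      exact le_trans (hfM k x hk) (le_trans (hv_ge k) (espline_ge α β n qnn hk))
    have hne_f : (hypo S f).Nonempty := ⟨(α, 0), hαS, (hfb α hαS).1⟩
    have hsub1 : hypo S f ⊆ hypo S g := by
      rintro ⟨x, t⟩ ⟨hxS, ht⟩
      exact ⟨hxS, le_trans ht (hfg x hxS)⟩
    have hne_g : (hypo S g).Nonempty := ⟨(α, 0), hsub1 ⟨hαS, (hfb α hαS).1⟩⟩
    have hsub2 : hypo S g ⊆ hypo S f + Metric.closedBall 0 (ε/2) := by
      rintro ⟨x, t⟩ ⟨hxS, ht⟩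
      rcases espline_cases α β n qnn x with h0 | ⟨k, hxk, hle⟩
      · exact Set.mem_add.mpr ⟨(x, t), ⟨hxS, le_trans ht (le_trans h0 (hfb x hxS).1)⟩, 0,
          by simpa using hε2, by simp⟩
      · have htk : t ≤ M k + ε/4 := le_trans ht (le_trans hle (hv_le k))
        obtain ⟨z, ⟨y, hyB, rfl⟩, hz⟩ := exists_lt_of_lt_csSup (himg_ne k)
          (show M k - ε/4 < M k by linarith)
        refine Set.mem_add.mpr ⟨(y, min t (f y)), ⟨hBsub k hyB, min_le_right _ _⟩,
          ((x, t) : (Fin m → ℝ) × ℝ) - (y, min t (f y)), ?_, by abel⟩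
        rw [mem_closedBall_zero_iff, Prod.norm_def]
        simp only [Prod.fst_sub, Prod.snd_sub]
        apply max_le
        · rw [pi_norm_le_iff_of_nonneg hε2]
          intro i
          have h1 := (hxk i).1; have h2 := (hxk i).2
          have h3 := (hyB i).1; have h4 := (hyB i).2
          have hUL : gridU α β n k i - gridL α β n k i = (β i - α i)/((n:ℝ)+1) := by
            simp only [gridL, gridU]; ring
          have hm := hmesh i
          rw [Real.norm_eq_abs, abs_le]
          constructor <;> simp only [Pi.sub_apply] <;> linarith
        · rw [Real.norm_eq_abs, abs_le]
          have hmin : min t (f y) ≤ t := min_le_left _ _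
          constructor
          · linarith
          · rcases le_total t (f y) with hc | hc
            · rw [min_eq_left hc]; linarith
            · rw [min_eq_right hc]; linarith
    have hdist : ∀ p : (Fin m → ℝ) × ℝ,
        |Metric.infDist p (hypo S f) - Metric.infDist p (hypo S g)| ≤ ε/2 := by
      intro p
      have h1 : Metric.infDist p (hypo S g) ≤ Metric.infDist p (hypo S f) :=
        Metric.infDist_le_infDist_of_subset hsub1 hne_f
      have h2 : Metric.infDist p (hypo S f) ≤ Metric.infDist p (hypo S g) + ε/2 :=
        infDist_le_add_of_subset hε2 hsub2 hne_g p
      rw [abs_sub_le_iff]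
      constructor <;> linarith
    exact ⟨g, ⟨⟨n, qnn⟩, rfl⟩, lt_of_le_of_lt (dl_le S f g hε2 hdist) (by linarith)⟩
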